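/- For any slice function f on a circular domain Ω_D, the zero set of the normal function N(f) is the circularization of the zero set of f: V(N(f)) = ∪_{y ∈ V(f)} S_y, where S_y is the sphere (or single real point) of quaternions with the same real part and modulus as y. -/

import Mathlib

noncomputable section
open Quaternion

abbrev Q := Quaternion ℝ
def qi : Q := ⟨0,1,0,0⟩
def qj : Q := ⟨0,0,1,0⟩
def qk : Q := ⟨0,0,0,1⟩

/-- The sphere of quaternionic imaginary units. -/
def QS : Set Q := {J | J ^ 2 = -1}

/-- The map `Φ_J : ℂ → ℍ`, `α + ιβ ↦ α + βJ`. -/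
def PhiJ (J : Q) (z : ℂ) : Q := (z.re : Q) + z.im • J

/-- The circularization `Ω_D` of a set `D ⊆ ℂ`. -/
def circSet (D : Set ℂ) : Set Q := {x | ∃ J ∈ QS, ∃ z ∈ D, x = PhiJ J z}

/-- `F = F₁ + ι F₂` is a stem function on the conjugation-invariant set `D`. -/
structure IsStemOn (D : Set ℂ) (F₁ F₂ : ℂ → Q) : Prop where
  conj_mem : ∀ z ∈ D, (starRingEnd ℂ) z ∈ D
  even : ∀ z ∈ D, F₁ ((starRingEnd ℂ) z) = F₁ z
  odd : ∀ z ∈ D, F₂ ((starRingEnd ℂ) z) = -F₂ z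

/-- `f` is the slice function induced by the stem function `F = F₁ + ι F₂` on `D`. -/
def InducedBy (D : Set ℂ) (F₁ F₂ : ℂ → Q) (f : Q → Q) : Prop :=
  ∀ J ∈ QS, ∀ z ∈ D, f (PhiJ J z) = F₁ z + J * F₂ z

/-- Spherical value. -/
def svalue (f : Q → Q) (x : Q) : Q := (f x + f (star x)) / 2

/-- Spherical derivative (on nonreal points). -/
def sderivS (f : Q → Q) (x : Q) : Q := (x.im : Q)⁻¹ * (f x - f (star x)) / 2

/-- The stem function `F G` (product in `ℍ ⊗ ℂ`) of the slice product `f ⬝ g`: first component. -/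
def stemMul₁ (F₁ F₂ G₁ G₂ : ℂ → Q) : ℂ → Q := fun z => F₁ z * G₁ z - F₂ z * G₂ z
/-- Second component of the product stem function. -/
def stemMul₂ (F₁ F₂ G₁ G₂ : ℂ → Q) : ℂ → Q := fun z => F₁ z * G₂ z + F₂ z * G₁ z

/-- The stem function `F` is holomorphic on `D` (Cauchy-Riemann equations). -/
def HolStemOn (D : Set ℂ) (F₁ F₂ : ℂ → Q) : Prop :=
  ∀ z ∈ D, DifferentiableAt ℝ F₁ z ∧ DifferentiableAt ℝ F₂ z ∧
    fderiv ℝ F₁ z Complex.I = -(fderiv ℝ F₂ z 1) ∧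
    fderiv ℝ F₂ z Complex.I = fderiv ℝ F₁ z 1

/-- Partial derivative in the direction `v`. -/
def pd {E : Type*} [NormedAddCommGroup E] [NormedSpace ℝ E] (v : Q) (f : Q → E) : Q → E :=
  fun x => fderiv ℝ f x v

/-- The four-dimensional Laplacian. -/
def lap4 {E : Type*} [NormedAddCommGroup E] [NormedSpace ℝ E] (f : Q → E) : Q → E :=
  fun x => pd 1 (pd 1 f) x + pd qi (pd qi f) x + pd qj (pd qj f) x + pd qk (pd qk f) x

/-- The Cauchy-Riemann-Fueter operator. -/
def CRF (f : Q → Q) : Q → Q :=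
  fun x => pd 1 f x + qi * pd qi f x + qj * pd qj f x + qk * pd qk f x


section Helpers

lemma sq_neg_one_iff (J : Q) : J ^ 2 = -1 ↔ J.re = 0 ∧ Quaternion.normSq J = 1 := by
  rw [pow_two]
  constructor
  · intro h
    have h1 := congrArg QuaternionAlgebra.re h
    have h2 := congrArg QuaternionAlgebra.imI h
    have h3 := congrArg QuaternionAlgebra.imJ h
    have h4 := congrArg QuaternionAlgebra.imK h
    simp only [Quaternion.re_mul, Quaternion.imI_mul, Quaternion.imJ_mul, Quaternion.imK_mul,
      Quaternion.re_neg, Quaternion.re_one, Quaternion.imI_neg, Quaternion.imI_one,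
      Quaternion.imJ_neg, Quaternion.imJ_one, Quaternion.imK_neg, Quaternion.imK_one,
      neg_zero] at h1 h2 h3 h4
    have hre : J.re = 0 := by
      by_contra hre
      have hI : J.imI = 0 := by
        have : J.re * J.imI = 0 := by linarith
        exact (mul_eq_zero.1 this).resolve_left hre
      have hJ : J.imJ = 0 := by
        have : J.re * J.imJ = 0 := by linarith
        exact (mul_eq_zero.1 this).resolve_left hre
      have hK : J.imK = 0 := by
        have : J.re * J.imK = 0 := by linarith
        exact (mul_eq_zero.1 this).resolve_left hre
      nlinarith [h1]
    refine ⟨hre, ?_⟩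
    rw [Quaternion.normSq_def']
    nlinarith [h1, hre]
  · rintro ⟨h0, h1⟩
    rw [Quaternion.normSq_def'] at h1
    apply Quaternion.ext <;>
      simp only [Quaternion.re_mul, Quaternion.imI_mul, Quaternion.imJ_mul, Quaternion.imK_mul,
        Quaternion.re_neg, Quaternion.re_one, Quaternion.imI_neg, Quaternion.imI_one,
        Quaternion.imJ_neg, Quaternion.imJ_one, Quaternion.imK_neg, Quaternion.imK_one,
        neg_zero, h0] <;> nlinarith [h1]

lemma QS_re {J : Q} (h : J ∈ QS) : J.re = 0 := ((sq_neg_one_iff J).1 h).1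
lemma QS_normSq {J : Q} (h : J ∈ QS) : Quaternion.normSq J = 1 := ((sq_neg_one_iff J).1 h).2
lemma QS_neg {J : Q} (h : J ∈ QS) : -J ∈ QS := by
  simpa only [QS, Set.mem_setOf_eq, neg_sq] using h
lemma QS_ne_zero {J : Q} (h : J ∈ QS) : J ≠ 0 := by
  intro h0
  have := QS_normSq h
  rw [h0] at this; simp at this
lemma QS_star {J : Q} (h : J ∈ QS) : star J = -J := by
  apply Quaternion.ext <;> simp [QS_re h]

lemma PhiJ_re {J : Q} (hJ : J ∈ QS) (z : ℂ) : (PhiJ J z).re = z.re := by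
  simp [PhiJ, Quaternion.re_add, Quaternion.re_coe, Quaternion.re_smul, QS_re hJ]

lemma normSq_PhiJ {J : Q} (hJ : J ∈ QS) (z : ℂ) :
    Quaternion.normSq (PhiJ J z) = z.re ^ 2 + z.im ^ 2 := by
  have h0 := QS_re hJ
  have h1 := QS_normSq hJ
  rw [Quaternion.normSq_def'] at h1 ⊢
  simp only [PhiJ, Quaternion.re_add, Quaternion.imI_add, Quaternion.imJ_add, Quaternion.imK_add,
    Quaternion.re_coe, Quaternion.imI_coe, Quaternion.imJ_coe, Quaternion.imK_coe,
    Quaternion.re_smul, Quaternion.imI_smul, Quaternion.imJ_smul, Quaternion.imK_smul,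
    smul_eq_mul, h0, mul_zero, add_zero, zero_add]
  rw [h0] at h1
  linear_combination z.im ^ 2 * h1

lemma norm_eq_of_normSq {x y : Q} (h : Quaternion.normSq x = Quaternion.normSq y) : ‖x‖ = ‖y‖ :=
  (mul_self_inj (norm_nonneg _) (norm_nonneg _)).1
    (by rw [← Quaternion.normSq_eq_norm_mul_self, ← Quaternion.normSq_eq_norm_mul_self, h])

lemma real_decomp {J : Q} (hJ : J ∈ QS) {r s : ℝ} (h : (r : Q) + J * (s : Q) = 0) :
    r = 0 ∧ s = 0 := by
  rw [← Quaternion.coe_commutes, Quaternion.coe_mul_eq_smul] at h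
  have hre := congrArg QuaternionAlgebra.re h
  simp only [Quaternion.re_add, Quaternion.re_coe, Quaternion.re_smul, QS_re hJ,
    smul_eq_mul, mul_zero, add_zero, Quaternion.re_zero] at hre
  refine ⟨hre, ?_⟩
  rw [hre] at h
  simp only [Quaternion.coe_zero, zero_add, smul_eq_zero] at h
  exact h.resolve_right (QS_ne_zero hJ)

lemma normSq_smul' (r : ℝ) (a : Q) : Quaternion.normSq (r • a) = r ^ 2 * Quaternion.normSq a := by
  rw [Quaternion.normSq_def', Quaternion.normSq_def']
  simp only [Quaternion.re_smul, Quaternion.imI_smul, Quaternion.imJ_smul, Quaternion.imK_smul,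
    smul_eq_mul]
  ring

end Helpers

theorem jensen_stmt13 (D : Set ℂ) (F₁ F₂ : ℂ → Q) (f n : Q → Q)
    (hF : IsStemOn D F₁ F₂) (hf : InducedBy D F₁ F₂ f)
    (hn : InducedBy D (stemMul₁ F₁ F₂ (fun z => star (F₁ z)) (fun z => star (F₂ z)))
                      (stemMul₂ F₁ F₂ (fun z => star (F₁ z)) (fun z => star (F₂ z))) n) :
    {x ∈ circSet D | n x = 0} =
      {x ∈ circSet D | ∃ y ∈ circSet D, f y = 0 ∧ x.re = y.re ∧ ‖x‖ = ‖y‖} := by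
  ext x
  simp only [Set.mem_setOf_eq]
  constructor
  · rintro ⟨hx, hnx⟩
    refine ⟨hx, ?_⟩
    obtain ⟨J, hJ, z, hz, rfl⟩ := hx
    rw [hn J hJ z hz] at hnx
    simp only [stemMul₁, stemMul₂] at hnx
    set a := F₁ z with ha
    set b := F₂ z with hb
    have hsum : a * star b + b * star a = ((2 * (a * star b).re : ℝ) : Q) := by
      have h' : b * star a = star (a * star b) := by rw [star_mul, star_star]
      rw [h', Quaternion.self_add_star']
    have hdiff : a * star a - b * star b =
        ((Quaternion.normSq a - Quaternion.normSq b : ℝ) : Q) := by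
      rw [Quaternion.self_mul_star, Quaternion.self_mul_star]
      push_cast
      ring
    rw [hdiff, hsum] at hnx
    obtain ⟨h1, h2⟩ := real_decomp hJ hnx
    have hns : Quaternion.normSq a = Quaternion.normSq b := by linarith
    have hre0 : (a * star b).re = 0 := by linarith
    by_cases hb0 : b = 0
    · have ha0 : a = 0 := by
        rw [hb0, map_zero] at hns
        exact Quaternion.normSq_eq_zero.1 hns
      exact ⟨PhiJ J z, ⟨J, hJ, z, hz, rfl⟩,
        by rw [hf J hJ z hz, ← ha, ← hb, ha0, hb0]; simp, rfl, rfl⟩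
    · have hnb : Quaternion.normSq b ≠ 0 := fun h => hb0 (Quaternion.normSq_eq_zero.1 h)
      set K : Q := -((Quaternion.normSq b)⁻¹ • (a * star b)) with hKdef
      have hK : K ∈ QS := by
        rw [QS, Set.mem_setOf_eq, sq_neg_one_iff]
        constructor
        · simp [hKdef, Quaternion.re_neg, Quaternion.re_smul, hre0]
        · rw [hKdef, Quaternion.normSq_neg, normSq_smul', map_mul, Quaternion.normSq_star, hns]
          field_simp
      have hKb : K * b = -a := by
        rw [hKdef, neg_mul, smul_mul_assoc, mul_assoc, Quaternion.star_mul_self,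
          ← Quaternion.coe_commutes, Quaternion.coe_mul_eq_smul, smul_smul,
          inv_mul_cancel₀ hnb, one_smul]
      refine ⟨PhiJ K z, ⟨K, hK, z, hz, rfl⟩, ?_, ?_, ?_⟩
      · rw [hf K hK z hz, ← ha, ← hb, hKb, add_neg_cancel]
      · rw [PhiJ_re hJ, PhiJ_re hK]
      · exact norm_eq_of_normSq (by rw [normSq_PhiJ hJ, normSq_PhiJ hK])
  · rintro ⟨hx, y, hy, hfy, hre, hnorm⟩
    refine ⟨hx, ?_⟩
    obtain ⟨J, hJ, z, hz, rfl⟩ := hx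
    obtain ⟨J', hJ', w, hw, rfl⟩ := hy
    rw [PhiJ_re hJ, PhiJ_re hJ'] at hre
    have hnsq : z.re ^ 2 + z.im ^ 2 = w.re ^ 2 + w.im ^ 2 := by
      have h' : Quaternion.normSq (PhiJ J z) = Quaternion.normSq (PhiJ J' w) := by
        rw [Quaternion.normSq_eq_norm_mul_self, Quaternion.normSq_eq_norm_mul_self, hnorm]
      rwa [normSq_PhiJ hJ, normSq_PhiJ hJ'] at h'
    have him : z.im = w.im ∨ z.im = -w.im :=
      sq_eq_sq_iff_eq_or_eq_neg.1 (by rw [hre] at hnsq; linarith)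
    obtain ⟨K, hK, hzero⟩ : ∃ K ∈ QS, F₁ z + K * F₂ z = 0 := by
      rcases him with h | h
      · have hwz : w = z := Complex.ext hre.symm h.symm
        subst hwz
        rw [hf J' hJ' w hw] at hfy
        exact ⟨J', hJ', hfy⟩
      · have hwz : w = (starRingEnd ℂ) z := by
          apply Complex.ext
          · simpa using hre.symm
          · simp only [Complex.conj_im]
            linarith
        refine ⟨-J', QS_neg hJ', ?_⟩
        rw [hf J' hJ' w hw, hwz, hF.even z hz, hF.odd z hz] at hfy
        rw [neg_mul, ← mul_neg]
        exact hfy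
    rw [hn J hJ z hz]
    simp only [stemMul₁, stemMul₂]
    set a := F₁ z with ha
    set b := F₂ z with hb
    have hA : a = -(K * b) := eq_neg_of_add_eq_zero_left hzero
    have hKs : star K = -K := QS_star hK
    have hnsab : Quaternion.normSq a = Quaternion.normSq b := by
      rw [hA, Quaternion.normSq_neg, map_mul, QS_normSq hK, one_mul]
    have c1 : a * star a - b * star b = 0 := by
      rw [Quaternion.self_mul_star, Quaternion.self_mul_star, hnsab, sub_self]
    have c2 : a * star b + b * star a = 0 := by
      have hsa : star a = star b * K := by
        rw [hA, star_neg, star_mul, hKs, mul_neg, neg_neg]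
      rw [hsa, hA, neg_mul, mul_assoc, ← mul_assoc b, Quaternion.self_mul_star,
        Quaternion.coe_commutes, neg_add_cancel]
    rw [c1, c2, mul_zero, add_zero]
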